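/- arXiv:2506.18694 — 2 statements merged into one kernel-verified Lean document; each statement's English description precedes it below -/
import Mathlib

section
/- Let H be a finite-dimensional complex Hilbert space, S : H → H skew-adjoint, k ≥ 1 real, and suppose a sequence e_n ∈ H satisfies e_{n+1} = ((k-1)/(k+1)) (kI + S)⁻¹ (kI - S) e_n. Then after m·⌈k⌉ steps (m a positive integer), ‖e_{m⌈k⌉}‖ ≤ exp(-m) · ‖e_0‖. -/
lemma hss_norm_step
    {H : Type*} [NormedAddCommGroup H] [InnerProductSpace ℂ H]
    (S : H →ₗ[ℂ] H)
    (hS : ∀ x y : H, (inner ℂ (S x) y : ℂ) = - inner ℂ x (S y))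
    (k : ℝ) (hk : 0 < k)
    (T : H →ₗ[ℂ] H)
    (hT1 : ((k : ℂ) • (LinearMap.id : H →ₗ[ℂ] H) + S) ∘ₗ T = LinearMap.id)
    (x : H) : ‖T ((k : ℂ) • x - S x)‖ = ‖x‖ := by
  set y := T ((k : ℂ) • x - S x) with hy
  have h1 : (k : ℂ) • y + S y = (k : ℂ) • x - S x := by
    have := LinearMap.congr_fun hT1 ((k : ℂ) • x - S x)
    simpa only [LinearMap.comp_apply, LinearMap.add_apply, LinearMap.smul_apply,
      LinearMap.id_apply, ← hy] using this
  have h2 : (k : ℂ) • (y - x) = - S (y + x) := by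
    rw [smul_sub, map_add]
    have h : (k : ℂ) • y - (k : ℂ) • x = ((k : ℂ) • y + S y) - S y - (k : ℂ) • x := by abel
    rw [h, h1]; abel
  have hz : ∀ z : H, (inner ℂ (S z) z : ℂ).re = 0 := by
    intro z
    have h' : (inner ℂ (S z) z : ℂ) = - (starRingEnd ℂ) (inner ℂ (S z) z : ℂ) := by
      rw [inner_conj_symm]; exact hS z z
    have h2 := congrArg Complex.re h'
    simp only [Complex.neg_re, Complex.conj_re] at h2
    linarith
  have key : ((k : ℂ) * inner ℂ (y - x) (y + x)).re = 0 := by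
    have h : ((k : ℂ) * inner ℂ (y - x) (y + x)) = inner ℂ ((k:ℂ) • (y - x)) (y + x) := by
      rw [inner_smul_left, Complex.conj_ofReal]
    rw [h, h2, inner_neg_left, Complex.neg_re, hz (y + x), neg_zero]
  have hre : (inner ℂ (y - x) (y + x) : ℂ).re = 0 := by
    have h : ((k : ℂ) * inner ℂ (y - x) (y + x)).re = k * (inner ℂ (y - x) (y + x) : ℂ).re :=
      Complex.re_ofReal_mul k _
    rw [h] at key
    exact (mul_eq_zero.1 key).resolve_left hk.ne'
  have hexp : (inner ℂ (y - x) (y + x) : ℂ) =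
      inner ℂ y y - inner ℂ x x + (inner ℂ y x - inner ℂ x y) := by
    rw [inner_sub_left, inner_add_right, inner_add_right]
    ring
  have hconj : (inner ℂ y x : ℂ) = (starRingEnd ℂ) (inner ℂ x y : ℂ) := (inner_conj_symm y x).symm
  have hnorm : ‖y‖ ^ 2 = ‖x‖ ^ 2 := by
    have h3 := hre
    rw [hexp] at h3
    have hyy : (inner ℂ y y : ℂ).re = ‖y‖ ^ 2 := by
      simpa using inner_self_eq_norm_sq (𝕜 := ℂ) y
    have hxx : (inner ℂ x x : ℂ).re = ‖x‖ ^ 2 := by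
      simpa using inner_self_eq_norm_sq (𝕜 := ℂ) x
    have hcross : ((inner ℂ y x : ℂ) - inner ℂ x y).re = 0 := by
      rw [hconj, Complex.sub_re, Complex.conj_re, sub_self]
    simp only [Complex.add_re, Complex.sub_re] at h3 hcross
    rw [hyy, hxx] at h3
    linarith
  nlinarith [norm_nonneg y, norm_nonneg x]

theorem hss_error_after_mk_steps
    {H : Type*} [NormedAddCommGroup H] [InnerProductSpace ℂ H]
    [FiniteDimensional ℂ H]
    (S : H →ₗ[ℂ] H)
    (hS : ∀ x y : H, (inner ℂ (S x) y : ℂ) = - inner ℂ x (S y))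
    (k : ℝ) (hk : 1 ≤ k)
    (T : H →ₗ[ℂ] H)
    (hT1 : ((k : ℂ) • (LinearMap.id : H →ₗ[ℂ] H) + S) ∘ₗ T = LinearMap.id)
    (hT2 : T ∘ₗ ((k : ℂ) • (LinearMap.id : H →ₗ[ℂ] H) + S) = LinearMap.id)
    (e : ℕ → H)
    (hrec : ∀ n, e (n+1) = (((k - 1)/(k + 1) : ℝ) : ℂ) • T ((k : ℂ) • e n - S (e n)))
    (m : ℕ) (hm : 0 < m) :
    ‖e (m * ⌈k⌉₊)‖ ≤ Real.exp (-(m : ℝ)) * ‖e 0‖ := by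
  have hk0 : (0:ℝ) < k := lt_of_lt_of_le one_pos hk
  have hkk : (0:ℝ) < k + 1 := by linarith
  set r : ℝ := (k - 1)/(k + 1) with hr
  have hr0 : 0 ≤ r := by
    apply div_nonneg <;> linarith
  have hstep : ∀ n, ‖e (n+1)‖ = r * ‖e n‖ := by
    intro n
    rw [hrec n, norm_smul]
    rw [hss_norm_step S hS k hk0 T hT1 (e n)]
    simp [abs_of_nonneg hr0]
  have hgeom : ∀ n, ‖e n‖ = r ^ n * ‖e 0‖ := by
    intro n
    induction n with
    | zero => simp
    | succ n ih => rw [hstep n, ih, pow_succ]; ring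
  rw [hgeom]
  apply mul_le_mul_of_nonneg_right _ (norm_nonneg _)
  have hrle : r ≤ Real.exp (-(2/(k+1))) := by
    have h : r = -(2/(k+1)) + 1 := by rw [hr]; field_simp; ring
    rw [h]
    exact Real.add_one_le_exp _
  set N := m * ⌈k⌉₊ with hN
  calc r ^ N ≤ (Real.exp (-(2/(k+1)))) ^ N := pow_le_pow_left₀ hr0 hrle N
    _ = Real.exp ((N : ℝ) * (-(2/(k+1)))) := by rw [← Real.exp_nat_mul]
    _ ≤ Real.exp (-(m : ℝ)) := by
        apply Real.exp_le_exp.2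
        have hceil : (k : ℝ) ≤ (⌈k⌉₊ : ℝ) := Nat.le_ceil k
        have hceil1 : (1 : ℝ) ≤ (⌈k⌉₊ : ℝ) := by
          exact_mod_cast Nat.one_le_ceil_iff.2 hk0
        have hNk : (N : ℝ) = (m : ℝ) * (⌈k⌉₊ : ℝ) := by
          rw [hN]; push_cast; ring
        have hm' : (0:ℝ) ≤ m := Nat.cast_nonneg m
        rw [hNk]
        have heq : (m:ℝ) * (⌈k⌉₊:ℝ) * (-(2/(k+1))) = -(((m:ℝ) * (⌈k⌉₊:ℝ) * 2)/(k+1)) := by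
          ring
        rw [heq, neg_le_neg_iff, le_div_iff₀ hkk]
        nlinarith
end

section
/- Let H be a finite-dimensional complex Hilbert space, S : H → H skew-adjoint, k > 1 real, and b ∈ H. Then the fixed-point iteration U_{n+1} = ((k-1)/(k+1)) (kI+S)⁻¹(kI-S) U_n + (2k/(k+1)) (kI+S)⁻¹ b has a unique fixed point U*, and U* satisfies (I + S) U* = b. -/
theorem hss_fixed_point
    {H : Type*} [NormedAddCommGroup H] [InnerProductSpace ℂ H]
    [FiniteDimensional ℂ H]
    (S : H →ₗ[ℂ] H)
    (hS : ∀ x y : H, (inner ℂ (S x) y : ℂ) = - inner ℂ x (S y))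
    (k : ℝ) (hk : 1 < k)
    (T : H →ₗ[ℂ] H)
    (hT1 : ((k : ℂ) • (LinearMap.id : H →ₗ[ℂ] H) + S) ∘ₗ T = LinearMap.id)
    (hT2 : T ∘ₗ ((k : ℂ) • (LinearMap.id : H →ₗ[ℂ] H) + S) = LinearMap.id)
    (b : H) :
    (∃! U : H,
      (((k - 1)/(k + 1) : ℝ) : ℂ) • T ((k : ℂ) • U - S U)
        + ((2 * k / (k + 1) : ℝ) : ℂ) • T b = U) ∧
    (∀ U : H,
      (((k - 1)/(k + 1) : ℝ) : ℂ) • T ((k : ℂ) • U - S U)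
        + ((2 * k / (k + 1) : ℝ) : ℂ) • T b = U → U + S U = b) := by
  set c : ℂ := (((k - 1)/(k + 1) : ℝ) : ℂ) with hc
  set d : ℂ := ((2 * k / (k + 1) : ℝ) : ℂ) with hd
  have hk1 : (k : ℝ) + 1 ≠ 0 := by linarith
  have hk1' : (k : ℂ) + 1 ≠ 0 := by
    exact_mod_cast (Complex.ofReal_ne_zero.mpr hk1)
  have hdne : d ≠ 0 := by
    rw [hd]
    push_cast
    intro h
    apply hk1'
    field_simp at h
    simp [Complex.ofReal_ne_zero] at h
    · linarith
  have hc1 : (k : ℂ) * (1 - c) = d := by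
    rw [hc, hd]; push_cast; field_simp; ring
  have hc2 : 1 + c = d := by
    rw [hc, hd]; push_cast; field_simp; ring
  have hc3 : c * k + d = k := by
    rw [hc, hd]; push_cast; field_simp; ring
  have hc4 : d - c = 1 := by
    rw [hc, hd]; push_cast; field_simp; ring
  -- T inverts A := k•id + S
  have hTA : ∀ x : H, T ((k : ℂ) • x + S x) = x := by
    intro x
    have := LinearMap.ext_iff.mp hT2 x
    simpa using this
  have hAT : ∀ x : H, (k : ℂ) • T x + S (T x) = x := by
    intro x
    have := LinearMap.ext_iff.mp hT1 x
    simpa using this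
  -- key equivalence
  have key : ∀ U : H, (c • T ((k : ℂ) • U - S U) + d • T b = U) ↔ U + S U = b := by
    intro U
    constructor
    · intro h
      set P := T ((k : ℂ) • U - S U) with hP'
      set Q := T b with hQ'
      have hP : (k : ℂ) • P + S P = (k : ℂ) • U - S U := hAT _
      have hQ : (k : ℂ) • Q + S Q = b := hAT _
      have step : (k : ℂ) • U + S U = c • ((k : ℂ) • U - S U) + d • b := by
        calc (k : ℂ) • U + S U
            = (k : ℂ) • (c • P + d • Q) + S (c • P + d • Q) := by rw [h]
          _ = c • ((k : ℂ) • P + S P) + d • ((k : ℂ) • Q + S Q) := by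
              rw [map_add, map_smul, map_smul]; module
          _ = c • ((k : ℂ) • U - S U) + d • b := by rw [hP, hQ]
      have hmain : d • (U + S U) = d • b := by
        have e : d • (U + S U) = ((k : ℂ) * (1 - c)) • U + (1 + c) • S U := by
          rw [hc1, hc2]; module
        have e2 : ((k : ℂ) * (1 - c)) • U + (1 + c) • S U
            = ((k : ℂ) • U + S U) - c • ((k : ℂ) • U - S U) := by module
        rw [e, e2, step]; module
      exact smul_right_injective H hdne hmain
    · intro h
      calc c • T ((k : ℂ) • U - S U) + d • T b
          = T (c • ((k : ℂ) • U - S U) + d • (U + S U)) := by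
            rw [h, map_add, map_smul, map_smul]
        _ = T ((c * k + d) • U + (d - c) • S U) := by
            congr 1; module
        _ = T ((k : ℂ) • U + S U) := by rw [hc3, hc4]; congr 1; module
        _ = U := hTA U
  -- injectivity of id + S
  have hinj : Function.Injective (LinearMap.id + S : H →ₗ[ℂ] H) := by
    rw [← LinearMap.ker_eq_bot]
    rw [LinearMap.ker_eq_bot']
    intro z hz
    have hz' : z + S z = 0 := by simpa using hz
    have hSz : S z = -z := eq_neg_of_add_eq_zero_right hz'
    have h1 : (inner ℂ (S z) z : ℂ) = - inner ℂ z (S z) := hS z z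
    rw [hSz] at h1
    simp only [inner_neg_left, inner_neg_right, neg_neg] at h1
    have : (inner ℂ z z : ℂ) = 0 := by linear_combination -h1/2
    exact inner_self_eq_zero.mp this
  have hsurj : Function.Surjective (LinearMap.id + S : H →ₗ[ℂ] H) :=
    (LinearMap.injective_iff_surjective).mp hinj
  obtain ⟨U, hU⟩ := hsurj b
  have hU' : U + S U = b := by simpa using hU
  refine ⟨⟨U, (key U).mpr hU', ?_⟩, fun V hV => (key V).mp hV⟩
  intro y hy
  have hy' : y + S y = b := (key y).mp hy
  have : (LinearMap.id + S : H →ₗ[ℂ] H) y = (LinearMap.id + S : H →ₗ[ℂ] H) U := by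
    simp [hy', hU']
  exact hinj this
end
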